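/- arXiv:2305.00342 — 3 statements merged into one kernel-verified Lean document; each statement's English description precedes it below -/
import Mathlib

section
/- Every finitely generated torsion-free nilpotent group admits a left-invariant total order. -/
/-- Levi's theorem via Zorn: any group whose operation is commutative and which is
torsion-free admits a positive cone. -/
lemma exists_cone_aux (A : Type*) [Group A] (hcomm : ∀ a b : A, a * b = b * a)
    (htf : ∀ a : A, ∀ n : ℕ, n ≠ 0 → a ^ n = 1 → a = 1) :
    ∃ S : Set A, (∀ a ∈ S, ∀ b ∈ S, a * b ∈ S) ∧ (1 : A) ∉ S ∧
      (∀ a : A, a ≠ 1 → a ∈ S ∨ a⁻¹ ∈ S) := by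
  classical
  set 𝒞 : Set (Set A) := {S | (∀ a ∈ S, ∀ b ∈ S, a * b ∈ S) ∧ (1 : A) ∉ S} with h𝒞
  obtain ⟨S, hSmax⟩ : ∃ m, Maximal (· ∈ 𝒞) m := by
    apply zorn_subset
    intro c hc hchain
    refine ⟨⋃₀ c, ⟨?_, ?_⟩, fun s hs => Set.subset_sUnion_of_mem hs⟩
    · rintro a ⟨s, hs, has⟩ b ⟨t, ht, hbt⟩
      rcases hchain.total hs ht with h | h
      · exact Set.subset_sUnion_of_mem ht ((hc ht).1 a (h has) b hbt)
      · exact Set.subset_sUnion_of_mem hs ((hc hs).1 a has b (h hbt))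
    · rintro ⟨s, hs, h1s⟩
      exact (hc hs).2 h1s
  have hS : S ∈ 𝒞 := hSmax.1
  -- closure of S under powers
  have hpow : ∀ a ∈ S, ∀ n : ℕ, n ≠ 0 → a ^ n ∈ S := by
    intro a ha n hn
    induction n with
    | zero => exact absurd rfl hn
    | succ n ih =>
      rcases Nat.eq_zero_or_pos n with h | h
      · subst h; simpa using ha
      · rw [pow_succ]
        exact hS.1 _ (ih h.ne') a ha
  refine ⟨S, hS.1, hS.2, ?_⟩
  -- extension of the cone by an element
  have hext : ∀ x : A, x ≠ 1 → x ∉ S → ∃ s ∈ S, ∃ n : ℕ, n ≠ 0 ∧ s * x ^ n = 1 := by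
    intro x hx1 hxS
    by_contra hno
    push_neg at hno
    set T : Set A := {z | (∃ s ∈ S, ∃ n : ℕ, z = s * x ^ n) ∨ ∃ n : ℕ, n ≠ 0 ∧ z = x ^ n}
      with hT
    have hST : S ⊆ T := fun s hs => Or.inl ⟨s, hs, 0, by simp⟩
    have hxT : x ∈ T := Or.inr ⟨1, one_ne_zero, (pow_one x).symm⟩
    have hTC : T ∈ 𝒞 := by
      constructor
      · rintro a (⟨s, hs, n, rfl⟩ | ⟨n, hn, rfl⟩) b (⟨t, ht, m, rfl⟩ | ⟨m, hm, rfl⟩)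
        · refine Or.inl ⟨s * t, hS.1 s hs t ht, n + m, ?_⟩
          rw [pow_add]
          calc s * x ^ n * (t * x ^ m) = s * (x ^ n * t) * x ^ m := by group
            _ = s * (t * x ^ n) * x ^ m := by rw [hcomm (x ^ n) t]
            _ = s * t * (x ^ n * x ^ m) := by group
        · refine Or.inl ⟨s, hs, n + m, ?_⟩
          rw [pow_add, mul_assoc]
        · refine Or.inl ⟨t, ht, n + m, ?_⟩
          calc x ^ n * (t * x ^ m) = (x ^ n * t) * x ^ m := by group
            _ = (t * x ^ n) * x ^ m := by rw [hcomm (x ^ n) t]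
            _ = t * x ^ (n + m) := by rw [pow_add, mul_assoc]
        · exact Or.inr ⟨n + m, by positivity, (pow_add x n m).symm⟩
      · rintro (⟨s, hs, n, hsn⟩ | ⟨n, hn, hxn⟩)
        · rcases Nat.eq_zero_or_pos n with h | h
          · subst h; simp at hsn; subst hsn; exact hS.2 hs
          · exact hno s hs n h.ne' hsn.symm
        · exact hx1 (htf x n hn hxn.symm)
    have := hSmax.2 hTC hST hxT
    exact hxS this
  intro a ha1
  by_contra hnot
  push_neg at hnot
  obtain ⟨s, hs, n, hn, hsn⟩ := hext a ha1 hnot.1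
  obtain ⟨t, ht, m, hm, htm⟩ := hext a⁻¹ (by simpa using ha1) hnot.2
  -- s * a^n = 1 and t * a^(-m) = 1 give s^m * t^n = 1 ∈ S, contradiction
  have hs' : s = (a ^ n)⁻¹ := by
    rw [eq_inv_iff_mul_eq_one]; exact hsn
  have ht' : t = a ^ m := by
    have : t * (a ^ m)⁻¹ = 1 := by simpa [inv_pow] using htm
    rwa [mul_inv_eq_one] at this
  have key : s ^ m * t ^ n = 1 := by
    subst hs'; subst ht'
    rw [← inv_pow, ← pow_mul, ← pow_mul, Nat.mul_comm m n, inv_pow, inv_mul_cancel]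
  have h1 : (1 : A) ∈ S := by
    rw [← key]
    exact hS.1 _ (hpow s hs m hm) _ (hpow t ht n hn)
  exact hS.2 h1

/-- If `c = x * y * x⁻¹ * y⁻¹` is central, then `xⁿ * y * x⁻ⁿ * y⁻¹ = cⁿ`. -/
lemma commutator_pow_of_central {H : Type*} [Group H] (x y : H)
    (hc : ∀ z : H, z * (x * y * x⁻¹ * y⁻¹) = (x * y * x⁻¹ * y⁻¹) * z) (n : ℕ) :
    x ^ n * y * (x ^ n)⁻¹ * y⁻¹ = (x * y * x⁻¹ * y⁻¹) ^ n := by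
  set c := x * y * x⁻¹ * y⁻¹ with hcdef
  have hcomm : ∀ z : H, Commute z c := fun z => hc z
  induction n with
  | zero => simp
  | succ n ih =>
    have h1 : x ^ n * y * (x ^ n)⁻¹ = c ^ n * y := by
      have := ih
      calc x ^ n * y * (x ^ n)⁻¹ = x ^ n * y * (x ^ n)⁻¹ * y⁻¹ * y := by group
        _ = c ^ n * y := by rw [ih]
    calc x ^ (n + 1) * y * (x ^ (n + 1))⁻¹ * y⁻¹
        = x * (x ^ n * y * (x ^ n)⁻¹) * x⁻¹ * y⁻¹ := by
          rw [pow_succ']; group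
      _ = x * (c ^ n * y) * x⁻¹ * y⁻¹ := by rw [h1]
      _ = x * c ^ n * (y * x⁻¹ * y⁻¹) := by group
      _ = c ^ n * x * (y * x⁻¹ * y⁻¹) := by
          rw [((hcomm x).pow_right n).eq]
      _ = c ^ n * (x * y * x⁻¹ * y⁻¹) := by group
      _ = c ^ n * c := by rw [← hcdef]
      _ = c ^ (n + 1) := by rw [pow_succ]

section Nilpotent

variable {G : Type*} [Group G]

local notation "uc" => Subgroup.upperCentralSeries G

/-- Successive quotients of the upper central series of a torsion-free group are
torsion-free (Mal'cev). -/
lemma upperCentralSeries_succ_isolated (htf : ∀ g : G, g ≠ 1 → ¬IsOfFinOrder g) :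
    ∀ i : ℕ, ∀ x : G, x ∈ uc (i + 1) → ∀ n : ℕ, n ≠ 0 → x ^ n ∈ uc i → x ∈ uc i := by
  intro i
  induction i with
  | zero =>
    intro x _ n hn hxn
    rw [upperCentralSeries_zero, Subgroup.mem_bot] at hxn ⊢
    by_contra hx1
    exact htf x hx1 (isOfFinOrder_iff_pow_eq_one.mpr ⟨n, Nat.pos_of_ne_zero hn, hxn⟩)
  | succ i ih =>
    intro x hx n hn hxn
    rw [mem_upperCentralSeries_succ_iff] at hx ⊢
    intro y
    set c := x * y * x⁻¹ * y⁻¹ with hcdef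
    have hcmem : c ∈ uc (i + 1) := hx y
    -- work in the quotient by uc i
    set N := uc i with hN
    have hcentral : ∀ z : G⧸N, z * ((x : G⧸N) * y * (x : G⧸N)⁻¹ * (y : G⧸N)⁻¹) =
        ((x : G⧸N) * y * (x : G⧸N)⁻¹ * (y : G⧸N)⁻¹) * z := by
      intro z
      induction z using QuotientGroup.induction_on with
      | H z =>
        have hz : c * z * c⁻¹ * z⁻¹ ∈ N := (mem_upperCentralSeries_succ_iff.mp hcmem) z
        have : ((c * z * c⁻¹ * z⁻¹ : G) : G⧸N) = 1 := (QuotientGroup.eq_one_iff _).mpr hz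
        have h2 : ((c : G⧸N)) * z * (c : G⧸N)⁻¹ * (z : G⧸N)⁻¹ = 1 := by
          simpa using this
        have h3 : (c : G⧸N) * z = z * (c : G⧸N) := by
          rwa [mul_inv_eq_one, mul_inv_eq_iff_eq_mul] at h2
        have hc_eq : ((c : G) : G⧸N) = (x : G⧸N) * y * (x : G⧸N)⁻¹ * (y : G⧸N)⁻¹ := rfl
        rw [← hc_eq]
        exact h3.symm
    have hpowc : ((x : G⧸N)) ^ n * y * ((x : G⧸N) ^ n)⁻¹ * (y : G⧸N)⁻¹ =
        ((x : G⧸N) * y * (x : G⧸N)⁻¹ * (y : G⧸N)⁻¹) ^ n :=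
      commutator_pow_of_central _ _ hcentral n
    -- x^n ∈ uc (i+1), so [x^n, y] ∈ uc i = N, so LHS is 1
    have hxny : x ^ n * y * (x ^ n)⁻¹ * y⁻¹ ∈ N :=
      (mem_upperCentralSeries_succ_iff.mp hxn) y
    have hlhs : ((x : G⧸N)) ^ n * y * ((x : G⧸N) ^ n)⁻¹ * (y : G⧸N)⁻¹ = 1 := by
      have : ((x ^ n * y * (x ^ n)⁻¹ * y⁻¹ : G) : G⧸N) = 1 :=
        (QuotientGroup.eq_one_iff _).mpr hxny
      simpa using this
    have hcn : ((c : G⧸N)) ^ n = 1 := by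
      have : ((x : G⧸N) * y * (x : G⧸N)⁻¹ * (y : G⧸N)⁻¹) ^ n = 1 := by
        rw [← hpowc]; exact hlhs
      simpa [hcdef] using this
    have hcnN : c ^ n ∈ N := by
      rw [← QuotientGroup.eq_one_iff, QuotientGroup.mk_pow]
      exact hcn
    exact ih c hcmem n hn hcnN

/-- Membership in the center of the quotient corresponds to the next step of the
upper central series. -/
lemma mk_mem_center_iff (i : ℕ) (x : G) :
    (x : G ⧸ uc i) ∈ Subgroup.center (G ⧸ uc i) ↔ x ∈ uc (i + 1) := by
  rw [Subgroup.mem_center_iff, mem_upperCentralSeries_succ_iff]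
  constructor
  · intro h y
    have h1 := h ((y⁻¹ : G) : G ⧸ uc i)
    rw [← QuotientGroup.mk_mul, ← QuotientGroup.mk_mul, QuotientGroup.eq] at h1
    have h2 : (y⁻¹ * x)⁻¹ * (x * y⁻¹) ∈ uc i := h1
    have h3 := (inferInstance : (uc i).Normal).conj_mem _ h2 x
    have h4 := (uc i).inv_mem h3
    have heq : x * y * x⁻¹ * y⁻¹ = (x * ((y⁻¹ * x)⁻¹ * (x * y⁻¹)) * x⁻¹)⁻¹ := by group
    rw [commutatorElement_def, heq]
    exact h4
  · intro h y
    induction y using QuotientGroup.induction_on with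
    | H y =>
      rw [← QuotientGroup.mk_mul, ← QuotientGroup.mk_mul, QuotientGroup.eq]
      have h2 := h y⁻¹
      have h3 := (uc i).inv_mem h2
      have h4 := (inferInstance : (uc i).Normal).conj_mem _ h3 x⁻¹
      have heq : (y * x)⁻¹ * (x * y) = x⁻¹ * (x * y⁻¹ * x⁻¹ * y⁻¹⁻¹)⁻¹ * x⁻¹⁻¹ := by group
      rw [heq]
      exact h4

end Nilpotent

/-- Every finitely generated torsion-free nilpotent group admits a left-invariant
total order. -/
theorem stmt8 {G : Type*} [Group G] [Group.IsNilpotent G] [Group.FG G]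
    (htf : ∀ g : G, g ≠ 1 → ¬IsOfFinOrder g) :
    ∃ lt : G → G → Prop, IsStrictTotalOrder G lt ∧
      ∀ a b c : G, lt a b → lt (c * a) (c * b) := by
  classical
  set uc := Subgroup.upperCentralSeries G with huc
  -- for each i, a cone on the center of G ⧸ uc i
  have hcone : ∀ i : ℕ, ∃ S : Set (Subgroup.center (G ⧸ uc i)),
      (∀ a ∈ S, ∀ b ∈ S, a * b ∈ S) ∧ (1 : Subgroup.center (G ⧸ uc i)) ∉ S ∧
      (∀ a : Subgroup.center (G ⧸ uc i), a ≠ 1 → a ∈ S ∨ a⁻¹ ∈ S) := by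
    intro i
    apply exists_cone_aux
    · rintro ⟨a, ha⟩ ⟨b, hb⟩
      ext
      show a * b = b * a
      exact Subgroup.mem_center_iff.mp hb a
    · rintro ⟨a, ha⟩ n hn h1
      induction a using QuotientGroup.induction_on with
      | H x =>
        have hxn : x ^ n ∈ uc i := by
          have : ((x : G ⧸ uc i)) ^ n = 1 := by
            simpa [Subtype.ext_iff] using h1
          rwa [← QuotientGroup.mk_pow, QuotientGroup.eq_one_iff] at this
        have hx1 : x ∈ uc (i + 1) := (mk_mem_center_iff i x).mp ha
        have := upperCentralSeries_succ_isolated htf i x hx1 n hn hxn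
        ext
        simpa [QuotientGroup.eq_one_iff] using this
  choose S hSmul hSone hStot using hcone
  -- the positivity predicate
  set P : G → Prop := fun g => ∃ i, g ∉ uc i ∧
    ∃ h : (g : G ⧸ uc i) ∈ Subgroup.center (G ⧸ uc i),
      (⟨(g : G ⧸ uc i), h⟩ : Subgroup.center (G ⧸ uc i)) ∈ S i with hP
  -- P is multiplicative
  have hPmul : ∀ x y : G, P x → P y → P (x * y) := by
    rintro x y ⟨i, hxi, hxc, hxS⟩ ⟨j, hyj, hyc, hyS⟩
    rcases lt_trichotomy i j with hij | rfl | hij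
    · -- x ∈ uc (i+1) ⊆ uc j, so xy behaves like y at level j
      have hxucj : x ∈ uc j := by
        have : x ∈ uc (i + 1) := (mk_mem_center_iff i x).mp hxc
        exact upperCentralSeries_mono G hij this
      refine ⟨j, ?_, ?_⟩
      · intro hcon
        have h5 := (uc j).mul_mem ((uc j).inv_mem hxucj) hcon
        rw [inv_mul_cancel_left] at h5
        exact hyj h5
      · have hmk : ((x * y : G) : G ⧸ uc j) = (y : G ⧸ uc j) := by
          rw [QuotientGroup.mk_mul, (QuotientGroup.eq_one_iff x).mpr hxucj, one_mul]
        refine ⟨by rw [hmk]; exact hyc, ?_⟩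
        exact Set.mem_of_eq_of_mem (Subtype.ext hmk) hyS
    · -- same level: multiply in the cone
      have hc : ((x * y : G) : G ⧸ uc i) ∈ Subgroup.center (G ⧸ uc i) := by
        rw [QuotientGroup.mk_mul]; exact Subgroup.mul_mem _ hxc hyc
      refine ⟨i, ?_, hc, ?_⟩
      · intro hcon
        have : (⟨(x : G ⧸ uc i), hxc⟩ : Subgroup.center (G ⧸ uc i)) *
            ⟨(y : G ⧸ uc i), hyc⟩ = 1 := by
          ext
          show (x : G ⧸ uc i) * y = 1
          rw [← QuotientGroup.mk_mul, QuotientGroup.eq_one_iff]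
          exact hcon
        have h1 := hSmul i _ hxS _ hyS
        rw [this] at h1
        exact hSone i h1
      · have h1 := hSmul i _ hxS _ hyS
        exact Set.mem_of_eq_of_mem (Subtype.ext rfl) h1
    · -- symmetric: y ∈ uc i
      have hyuci : y ∈ uc i := by
        have : y ∈ uc (j + 1) := (mk_mem_center_iff j y).mp hyc
        exact upperCentralSeries_mono G hij this
      refine ⟨i, ?_, ?_⟩
      · intro hcon
        exact hxi (by simpa using (uc i).mul_mem hcon ((uc i).inv_mem hyuci))
      · have hmk : ((x * y : G) : G ⧸ uc i) = (x : G ⧸ uc i) := by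
          rw [QuotientGroup.mk_mul, (QuotientGroup.eq_one_iff y).mpr hyuci, mul_one]
        refine ⟨by rw [hmk]; exact hxc, ?_⟩
        exact Set.mem_of_eq_of_mem (Subtype.ext hmk) hxS
  -- P is total on nontrivial elements
  have hPtot : ∀ g : G, g ≠ 1 → P g ∨ P g⁻¹ := by
    intro g hg
    obtain ⟨c, hc⟩ := Group.IsNilpotent.nilpotent (G := G)
    have hex : ∃ n, g ∈ uc n := ⟨c, by rw [huc, hc]; exact Subgroup.mem_top g⟩
    have hgk : g ∈ uc (Nat.find hex) := Nat.find_spec hex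
    have hkpos : Nat.find hex ≠ 0 := by
      intro h0
      rw [h0] at hgk
      rw [show uc 0 = ⊥ from rfl, Subgroup.mem_bot] at hgk
      exact hg hgk
    obtain ⟨i, hki⟩ := Nat.exists_eq_succ_of_ne_zero hkpos
    rw [hki] at hgk
    have hgi : g ∉ uc i := Nat.find_min hex (by rw [hki]; exact Nat.lt_succ_self i)
    have hgc : (g : G ⧸ uc i) ∈ Subgroup.center (G ⧸ uc i) :=
      (mk_mem_center_iff i g).mpr hgk
    have hne : (⟨(g : G ⧸ uc i), hgc⟩ : Subgroup.center (G ⧸ uc i)) ≠ 1 := by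
      intro hcon
      apply hgi
      have : (g : G ⧸ uc i) = 1 := by simpa [Subtype.ext_iff] using hcon
      rwa [QuotientGroup.eq_one_iff] at this
    rcases hStot i _ hne with h | h
    · exact Or.inl ⟨i, hgi, hgc, h⟩
    · refine Or.inr ⟨i, fun hcon => hgi (by simpa using (uc i).inv_mem hcon), ?_, ?_⟩
      · rw [QuotientGroup.mk_inv]
        exact Subgroup.inv_mem _ hgc
      · exact Set.mem_of_eq_of_mem (Subtype.ext rfl) h
  have hPone : ¬ P 1 := by
    rintro ⟨i, h1, -⟩
    exact h1 (Subgroup.one_mem _)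
  set lt : G → G → Prop := fun a b => P (a⁻¹ * b) with hlt
  have hirr : ∀ a : G, ¬ lt a a := by
    intro a h
    have h' : P (a⁻¹ * a) := h
    rw [inv_mul_cancel] at h'
    exact hPone h'
  have htrans : ∀ a b c : G, lt a b → lt b c → lt a c := by
    intro a b c hab hbc
    have h1 : P (a⁻¹ * b) := hab
    have h2 : P (b⁻¹ * c) := hbc
    have := hPmul _ _ h1 h2
    show P (a⁻¹ * c)
    rwa [show a⁻¹ * b * (b⁻¹ * c) = a⁻¹ * c by group] at this
  have htrich : ∀ a b : G, lt a b ∨ a = b ∨ lt b a := by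
    intro a b
    by_cases hab : a = b
    · exact Or.inr (Or.inl hab)
    · have hne : a⁻¹ * b ≠ 1 := by
        intro h
        exact hab (by rwa [inv_mul_eq_one] at h)
      rcases hPtot _ hne with h | h
      · exact Or.inl h
      · refine Or.inr (Or.inr ?_)
        show P (b⁻¹ * a)
        rwa [show (a⁻¹ * b)⁻¹ = b⁻¹ * a by group] at h
  refine ⟨lt, ?_, ?_⟩
  · haveI h1 : Std.Irrefl lt := ⟨hirr⟩
    haveI h2 : IsTrans G lt := ⟨htrans⟩
    haveI h3 : Std.Trichotomous lt :=
      ⟨fun a b hab hba => by rcases htrich a b with h | h | h <;> tauto⟩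
    exact { toTrichotomous := h3, toIsStrictOrder := { toIrrefl := h1, toIsTrans := h2 } }
  · intro a b c h
    show P ((c * a)⁻¹ * (c * b))
    have h' : P (a⁻¹ * b) := h
    rwa [show (c * a)⁻¹ * (c * b) = a⁻¹ * b by group]
end

section
/- For integers k ≥ 1, positive real numbers p₁, …, pₖ, r with 1/p₁ + ⋯ + 1/pₖ + 1/r < 1, the series ∑ over (i₁,…,iₖ,j) ∈ ℤ^{k+1} of 1/(|i₁|^{p₁} + ⋯ + |iₖ|^{pₖ} + |j|^r + 1) converges. -/
/-- One-dimensional summability: `∑_{i ∈ ℤ} ((|i|^p + 1)^θ)⁻¹` converges when `p * θ > 1`. -/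
lemma aux_one_dim {p θ : ℝ} (hp : 0 < p) (hθ : 0 < θ) (hc : 1 < p * θ) :
    Summable (fun i : ℤ => ((|(i : ℝ)| ^ p + 1) ^ θ)⁻¹) := by
  have hbig : Summable (fun i : ℤ => |(i : ℝ)| ^ (-(p * θ)) + if i = 0 then (1 : ℝ) else 0) := by
    refine (Real.summable_abs_int_rpow hc).add ?_
    refine summable_of_ne_finset_zero (s := {0}) ?_
    intro i hi
    simp only [Finset.mem_singleton] at hi
    simp [hi]
  refine Summable.of_nonneg_of_le (fun i => inv_nonneg.2 (Real.rpow_nonneg (by positivity) _))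
    (fun i => ?_) hbig
  rcases eq_or_ne i 0 with h0 | h0
  · subst h0
    rw [if_pos rfl]
    simp only [Int.cast_zero, abs_zero]
    rw [Real.zero_rpow hp.ne', zero_add, Real.one_rpow, inv_one]
    have : (0:ℝ) ≤ (0:ℝ) ^ (-(p*θ)) := Real.rpow_nonneg le_rfl _
    linarith
  · have habs : (1:ℝ) ≤ |(i : ℝ)| := by
      rw [← Int.cast_abs]
      exact_mod_cast Int.one_le_abs h0
    have hpos : (0:ℝ) < |(i:ℝ)| ^ p := Real.rpow_pos_of_pos (by linarith) _
    have h1 : |(i:ℝ)| ^ (p * θ) ≤ (|(i:ℝ)| ^ p + 1) ^ θ := by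
      rw [Real.rpow_mul (by positivity)]
      exact Real.rpow_le_rpow (le_of_lt hpos) (by linarith) hθ.le
    have h2 : ((|(i:ℝ)| ^ p + 1) ^ θ)⁻¹ ≤ (|(i:ℝ)| ^ (p * θ))⁻¹ := by
      apply inv_anti₀
      · exact Real.rpow_pos_of_pos (by positivity) _
      · exact h1
    rw [if_neg h0, add_zero, Real.rpow_neg (by positivity)]
    exact h2

/-- Summability of finite products over `Fin k → ℤ`. -/
lemma aux_pi_prod : ∀ (k : ℕ) (f : Fin k → ℤ → ℝ),
    (∀ n i, 0 ≤ f n i) → (∀ n, Summable (f n)) →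
    Summable (fun x : Fin k → ℤ => ∏ n, f n (x n)) := by
  intro k
  induction k with
  | zero =>
    intro f _ _
    exact Summable.of_finite
  | succ k ih =>
    intro f hnn hs
    have hg : Summable (fun y : Fin k → ℤ => ∏ n, f n.succ (y n)) :=
      ih _ (fun n i => hnn _ i) (fun n => hs _)
    have h2 : Summable (fun y : ℤ × (Fin k → ℤ) =>
        f 0 y.1 * ∏ n : Fin k, f n.succ (y.2 n)) := by
      apply Summable.mul_of_nonneg (hs 0) hg
      · intro i; exact hnn 0 i
      · intro y; exact Finset.prod_nonneg fun n _ => hnn _ _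
    refine (Equiv.summable_iff (Fin.consEquiv (fun _ : Fin (k+1) => ℤ))).mp
      (h2.congr fun y => ?_)
    simp [Fin.consEquiv, Function.comp, Fin.prod_univ_succ]

/-- The key pointwise bound: for nonnegative weights summing to one,
`1/(∑ aₙ + b + 1) ≤ ∏ ((aₙ+1)^θₙ)⁻¹ * ((b+1)^τ)⁻¹`. -/
lemma aux_bound {k : ℕ} (a : Fin k → ℝ) (b : ℝ) (θ : Fin k → ℝ) (τ : ℝ)
    (ha : ∀ n, 0 ≤ a n) (hb : 0 ≤ b) (hθ : ∀ n, 0 < θ n) (hτ : 0 < τ)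
    (hsum : (∑ n, θ n) + τ = 1) :
    1 / ((∑ n, a n) + b + 1) ≤ (∏ n, ((a n + 1) ^ θ n)⁻¹) * ((b + 1) ^ τ)⁻¹ := by
  have hsnn : 0 ≤ ∑ n, a n := Finset.sum_nonneg fun n _ => ha n
  set T : ℝ := (∑ n, a n) + b + 1 with hT_def
  have hTpos : 0 < T := by rw [hT_def]; linarith
  have hPpos : 0 < (∏ n, (a n + 1) ^ θ n) * (b + 1) ^ τ := by
    apply mul_pos
    · exact Finset.prod_pos fun n _ => Real.rpow_pos_of_pos (by have := ha n; linarith) _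
    · exact Real.rpow_pos_of_pos (by linarith) _
  have hPT : (∏ n, (a n + 1) ^ θ n) * (b + 1) ^ τ ≤ T := by
    have h1 : ∀ n, (a n + 1) ^ θ n ≤ T ^ θ n := fun n => by
      apply Real.rpow_le_rpow (by have := ha n; linarith) ?_ (hθ n).le
      have h2 : a n ≤ ∑ m, a m := Finset.single_le_sum (fun m _ => ha m) (Finset.mem_univ n)
      rw [hT_def]; linarith
    have h2 : (b + 1) ^ τ ≤ T ^ τ := by
      apply Real.rpow_le_rpow (by linarith) ?_ hτ.le
      rw [hT_def]; linarith
    calc (∏ n, (a n + 1) ^ θ n) * (b + 1) ^ τ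
        ≤ (∏ n, T ^ θ n) * T ^ τ := by
          apply mul_le_mul ?_ h2 (Real.rpow_nonneg (by linarith) _)
            (Finset.prod_nonneg fun n _ => Real.rpow_nonneg hTpos.le _)
          exact Finset.prod_le_prod
            (fun n _ => Real.rpow_nonneg (by have := ha n; linarith) _) (fun n _ => h1 n)
      _ = T ^ ((∑ n, θ n) + τ) := by
          rw [Real.rpow_add hTpos, Real.rpow_sum_of_pos hTpos]
      _ = T := by rw [hsum, Real.rpow_one]
  calc 1 / T ≤ ((∏ n, (a n + 1) ^ θ n) * (b + 1) ^ τ)⁻¹ := by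
        rw [one_div]
        exact inv_anti₀ hPpos hPT
    _ = (∏ n, ((a n + 1) ^ θ n)⁻¹) * ((b + 1) ^ τ)⁻¹ := by
        rw [mul_inv, ← Finset.prod_inv_distrib]

/-- For `k ≥ 1` and positive reals `p₁, …, pₖ, r` with `1/p₁ + ⋯ + 1/pₖ + 1/r < 1`,
the series `∑_{(i₁,…,iₖ,j) ∈ ℤ^{k+1}} 1/(|i₁|^{p₁} + ⋯ + |iₖ|^{pₖ} + |j|^r + 1)`
converges. -/
theorem stmt9 (k : ℕ) (hk : 1 ≤ k) (p : Fin k → ℝ) (r : ℝ)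
    (hp : ∀ n, 0 < p n) (hr : 0 < r)
    (hsub : (∑ n, 1 / p n) + 1 / r < 1) :
    Summable (fun x : (Fin k → ℤ) × ℤ =>
      1 / ((∑ n, |(x.1 n : ℝ)| ^ p n) + |(x.2 : ℝ)| ^ r + 1)) := by
  have hSpos : 0 < (∑ n, 1 / p n) + 1 / r := by
    have h1 : 0 ≤ ∑ n, 1 / p n := Finset.sum_nonneg fun n _ => div_nonneg zero_le_one (hp n).le
    have h2 : 0 < 1 / r := by positivity
    linarith
  set S : ℝ := (∑ n, 1 / p n) + 1 / r with hS_def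
  have hSinv : 1 < S⁻¹ := (one_lt_inv₀ hSpos).mpr hsub
  set θ : Fin k → ℝ := fun n => (S * p n)⁻¹ with hθ_def
  set τ : ℝ := (S * r)⁻¹ with hτ_def
  have hθpos : ∀ n, 0 < θ n := fun n => inv_pos.2 (mul_pos hSpos (hp n))
  have hτpos : 0 < τ := inv_pos.2 (mul_pos hSpos hr)
  have hθp : ∀ n, 1 < p n * θ n := by
    intro n
    have h : p n * θ n = S⁻¹ := by
      simp only [hθ_def, mul_inv]
      rw [mul_comm (S⁻¹), ← mul_assoc, mul_inv_cancel₀ (hp n).ne', one_mul]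
    rw [h]; exact hSinv
  have hτr : 1 < r * τ := by
    have h : r * τ = S⁻¹ := by
      simp only [hτ_def, mul_inv]
      rw [mul_comm (S⁻¹), ← mul_assoc, mul_inv_cancel₀ hr.ne', one_mul]
    rw [h]; exact hSinv
  have hsum1 : (∑ n, θ n) + τ = 1 := by
    have h1 : ∀ n, θ n = S⁻¹ * (1 / p n) := fun n => by
      simp only [hθ_def, mul_inv, one_div]
    have h2 : τ = S⁻¹ * (1 / r) := by simp only [hτ_def, mul_inv, one_div]
    calc (∑ n, θ n) + τ = S⁻¹ * ((∑ n, 1 / p n) + 1 / r) := by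
          rw [h2, Finset.sum_congr rfl (fun n _ => h1 n), ← Finset.mul_sum]
          ring
      _ = S⁻¹ * S := by rw [← hS_def]
      _ = 1 := inv_mul_cancel₀ hSpos.ne'
  -- dominating function
  have hG : Summable (fun x : (Fin k → ℤ) × ℤ =>
      (∏ n, ((|(x.1 n : ℝ)| ^ p n + 1) ^ θ n)⁻¹) * ((|(x.2 : ℝ)| ^ r + 1) ^ τ)⁻¹) := by
    have hpi : Summable (fun y : Fin k → ℤ => ∏ n, ((|(y n : ℝ)| ^ p n + 1) ^ θ n)⁻¹) :=
      aux_pi_prod k (fun n i => ((|(i : ℝ)| ^ p n + 1) ^ θ n)⁻¹)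
        (fun n i => inv_nonneg.2 (Real.rpow_nonneg (by positivity) _))
        (fun n => aux_one_dim (hp n) (hθpos n) (hθp n))
    apply Summable.mul_of_nonneg hpi (aux_one_dim hr hτpos hτr)
    · intro x
      exact Finset.prod_nonneg fun n _ => inv_nonneg.2 (Real.rpow_nonneg (by positivity) _)
    · intro j
      exact inv_nonneg.2 (Real.rpow_nonneg (by positivity) _)
  refine Summable.of_nonneg_of_le (fun x => ?_) (fun x => ?_) hG
  · positivity
  · exact aux_bound (fun n => |(x.1 n : ℝ)| ^ p n) (|(x.2 : ℝ)| ^ r) θ τ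
      (fun n => Real.rpow_nonneg (abs_nonneg _) _) (Real.rpow_nonneg (abs_nonneg _) _)
      hθpos hτpos hsum1
end

section
/- Let G be a torsion-free nilpotent group in which the quotient of any subgroup by its center is torsion-free. If f, g ∈ G satisfy [f, g^m] = e for some nonzero integer m, then [f, g] = e. -/
open scoped commutatorElement

/-- A monoid is torsion-free if no nontrivial element has finite order
(the definition `Monoid.IsTorsionFree` of the older Mathlib, since removed). -/
def Monoid.IsTorsionFree (G : Type*) [Monoid G] : Prop :=
  ∀ g : G, g ≠ 1 → ¬IsOfFinOrder g

/-- Let `G` be a torsion-free nilpotent group in which the quotient of any subgroup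
by its center is torsion-free. If `f, g ∈ G` satisfy `[f, g^m] = e` for some nonzero
integer `m`, then `[f, g] = e`. -/
theorem stmt18 {G : Type*} [Group G] [Group.IsNilpotent G]
    (htf : Monoid.IsTorsionFree G)
    (hZ : ∀ H : Subgroup G, Monoid.IsTorsionFree (H ⧸ Subgroup.center H))
    (f g : G) (m : ℤ) (hm : m ≠ 0) (h : ⁅f, g ^ m⁆ = 1) : ⁅f, g⁆ = 1 := by
  obtain ⟨n, hn⟩ := Subgroup.nilpotent_iff_lowerCentralSeries.mp ‹Group.IsNilpotent G›
  suffices key : ∀ j : ℕ, ∀ a ∈ (⊤ : Subgroup G).lowerCentralSeries (n - j),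
      ⁅a, g ^ m⁆ = 1 → ⁅a, g⁆ = 1 by
    refine key n f ?_ h
    simp [Nat.sub_self]
  intro j
  induction j with
  | zero =>
    intro a ha _
    rw [Nat.sub_zero, hn, Subgroup.mem_bot] at ha
    simp [ha]
  | succ j ih =>
    intro a ha hcomm
    set b := ⁅a, g⁆ with hb_def
    -- b lies one step deeper in the lower central series
    have hb1 : b ∈ (⊤ : Subgroup G).lowerCentralSeries (n - (j + 1) + 1) := by
      rw [Subgroup.lowerCentralSeries_succ]
      exact Subgroup.commutator_mem_commutator ha (Subgroup.mem_top g)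
    have hle : n - j ≤ n - (j + 1) + 1 := by omega
    have hb2 : b ∈ (⊤ : Subgroup G).lowerCentralSeries (n - j) :=
      Subgroup.lowerCentralSeries_antitone _ hle hb1
    -- a commutes with g^m
    have hA : Commute a (g ^ m) := commutatorElement_eq_one_iff_commute.mp hcomm
    -- hence b commutes with g^m as well
    have hB : Commute (g ^ m) b := by
      have hga : Commute (g ^ m) a := hA.symm
      have hgg : Commute (g ^ m) g := (Commute.refl g).zpow_left m
      rw [hb_def, commutatorElement_def]
      exact ((hga.mul_right hgg).mul_right hga.inv_right).mul_right hgg.inv_right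
    -- inductive hypothesis: b commutes with g
    have hbg : ⁅b, g⁆ = 1 := ih b hb2 (commutatorElement_eq_one_iff_commute.mpr hB.symm)
    have hBg : Commute b g := commutatorElement_eq_one_iff_commute.mp hbg
    -- a * g * a⁻¹ = b * g
    have hconj : a * g * a⁻¹ = b * g := by
      rw [hb_def, commutatorElement_def]
      group
    -- compute a * g^m * a⁻¹ two ways
    have h1 : a * g ^ m * a⁻¹ = b ^ m * g ^ m := by
      calc a * g ^ m * a⁻¹ = (a * g * a⁻¹) ^ m := by rw [conj_zpow]
        _ = (b * g) ^ m := by rw [hconj]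
        _ = b ^ m * g ^ m := hBg.mul_zpow m
    have h2 : a * g ^ m * a⁻¹ = g ^ m := by
      rw [hA.eq]
      group
    have hbm : b ^ m = 1 := by
      have : b ^ m * g ^ m = 1 * g ^ m := by rw [one_mul, ← h1, h2]
      exact mul_right_cancel this
    -- torsion-freeness forces b = 1
    by_contra hb_ne
    refine htf b hb_ne (isOfFinOrder_iff_pow_eq_one.mpr ⟨m.natAbs, Int.natAbs_pos.mpr hm, ?_⟩)
    rcases Int.natAbs_eq m with hcase | hcase
    · rw [← zpow_natCast, ← hcase, hbm]
    · rw [← zpow_natCast]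
      have : ((m.natAbs : ℤ)) = -m := by omega
      rw [this, zpow_neg, hbm, inv_one]
end
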